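/- Let H be a Kreĭn space and S a subspace admitting a decomposition S = R ⊕ N with R regular and N neutral, R ⊥ N. If the decomposition with N = S∩S^⊥ is direct (R ∩ N = {0}) and R is an operator range, and S is quasi-pseudo-regular (an operator range with such a decomposition), then R is closed, hence regular. -/

import Mathlib

open ContinuousLinearMap

noncomputable section

namespace KreinPaper

variable {H : Type*} [NormedAddCommGroup H] [InnerProductSpace ℂ H] [CompleteSpace H]

/-- The indefinite orthogonal companion of a subspace, with respect to the
indefinite inner product `[x, y] = ⟪J x, y⟫`. -/
def kOrth (J : H →L[ℂ] H) (S : Submodule ℂ H) : Submodule ℂ H where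
  carrier := {y | ∀ x ∈ S, (inner ℂ (J x) y : ℂ) = 0}
  add_mem' := by
    intro a b ha hb x hx
    simp only [Set.mem_setOf_eq] at ha hb ⊢
    rw [inner_add_right, ha x hx, hb x hx, add_zero]
  zero_mem' := by
    intro x _
    exact inner_zero_right _
  smul_mem' := by
    intro c a ha x hx
    simp only [Set.mem_setOf_eq] at ha ⊢
    rw [inner_smul_right, ha x hx, mul_zero]

/-- A regular subspace: closed, with `R ∩ R^⊥ = 0` and `R + R^⊥ = H`. -/
def IsRegular (J : H →L[ℂ] H) (R : Submodule ℂ H) : Prop :=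
  IsClosed (R : Set H) ∧ R ⊓ kOrth J R = ⊥ ∧ R ⊔ kOrth J R = ⊤

/-- A neutral subspace: the indefinite inner product vanishes on it. -/
def IsNeutral (J : H →L[ℂ] H) (N : Submodule ℂ H) : Prop :=
  ∀ n ∈ N, (inner ℂ (J n) n : ℂ) = 0

/-- Two subspaces are orthogonal in the indefinite inner product. -/
def AreKOrth (J : H →L[ℂ] H) (A B : Submodule ℂ H) : Prop :=
  ∀ a ∈ A, ∀ b ∈ B, (inner ℂ (J a) b : ℂ) = 0

/-- An operator range: the range of a bounded operator (equivalently, of a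
bounded operator on `H` itself). -/
def IsOpRange (S : Submodule ℂ H) : Prop :=
  ∃ T : H →L[ℂ] H, LinearMap.range (T : H →ₗ[ℂ] H) = S

/-- Quasi-pseudo-regular subspace: an operator range which is the orthogonal
sum of a regular subspace and a neutral subspace. -/
def IsQpr (J : H →L[ℂ] H) (S : Submodule ℂ H) : Prop :=
  IsOpRange S ∧ ∃ R N : Submodule ℂ H,
    IsRegular J R ∧ IsNeutral J N ∧ AreKOrth J R N ∧ S = R ⊔ N

/-- Pseudo-regular subspace: a closed subspace which is the orthogonal
sum of a regular subspace and a neutral subspace. -/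
def IsPseudoRegular (J : H →L[ℂ] H) (S : Submodule ℂ H) : Prop :=
  IsClosed (S : Set H) ∧ ∃ R N : Submodule ℂ H,
    IsRegular J R ∧ IsNeutral J N ∧ AreKOrth J R N ∧ S = R ⊔ N

/-- A fundamental symmetry: a selfadjoint involution. -/
def IsFundSym (J : H →L[ℂ] H) : Prop :=
  IsSelfAdjoint J ∧ J ∘L J = ContinuousLinearMap.id ℂ H

/-- The indefinite (Kreĭn space) adjoint `A* = J A† J`. -/
def kAdj (J : H →L[ℂ] H) (A : H →L[ℂ] H) : H →L[ℂ] H :=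
  J ∘L (ContinuousLinearMap.adjoint A) ∘L J


section Aux

variable {H : Type*} [NormedAddCommGroup H] [InnerProductSpace ℂ H] [CompleteSpace H]

lemma mem_kOrth {J : H →L[ℂ] H} {S : Submodule ℂ H} {y : H} :
    y ∈ kOrth J S ↔ ∀ x ∈ S, (inner ℂ (J x) y : ℂ) = 0 := Iff.rfl

lemma kOrth_isClosed (J : H →L[ℂ] H) (S : Submodule ℂ H) :
    IsClosed ((kOrth J S : Submodule ℂ H) : Set H) := by
  have : ((kOrth J S : Submodule ℂ H) : Set H) = ⋂ x ∈ S, {y | (inner ℂ (J x) y : ℂ) = 0} := by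
    ext y; simp [mem_kOrth, Set.mem_iInter]
  rw [this]
  refine isClosed_biInter fun x _ => isClosed_eq ?_ continuous_const
  exact (innerSL ℂ (J x)).continuous

lemma kOrth_antitone (J : H →L[ℂ] H) {S₁ S₂ : Submodule ℂ H} (h : S₁ ≤ S₂) :
    kOrth J S₂ ≤ kOrth J S₁ := fun _ hy x hx => hy x (h hx)

lemma inner_J_swap {J : H →L[ℂ] H} (hJs : ∀ x y : H, (inner ℂ (J x) y : ℂ) = inner ℂ x (J y))
    (x y : H) : (inner ℂ (J x) y : ℂ) = starRingEnd ℂ (inner ℂ (J y) x) := by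
  rw [← inner_conj_symm, hJs]

lemma neutral_pair {J : H →L[ℂ] H} {N : Submodule ℂ H}
    (hN : IsNeutral J N) {x y : H} (hx : x ∈ N) (hy : y ∈ N) :
    (inner ℂ (J x) y : ℂ) = 0 := by
  have h1 := hN _ (N.add_mem hx hy)
  have h2 := hN _ (N.add_mem hx (N.smul_mem Complex.I hy))
  have hxx := hN _ hx
  have hyy := hN _ hy
  simp only [map_add, inner_add_left, inner_add_right, map_smul, inner_smul_left,
    inner_smul_right, Complex.conj_I] at h1 h2
  rw [hxx, hyy] at h1
  rw [hxx, hyy] at h2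
  linear_combination h1 / 2 - Complex.I / 2 * h2 + ((inner ℂ (J x) y : ℂ) - inner ℂ (J y) x) / 2 * Complex.I_sq

end Aux

/-- if `S` is qpr, `R` is an operator range, and
`S = R ⊕ S⁰` is an orthogonal direct sum with `S⁰ = S ∩ S^⊥`, then `R` is
closed, hence regular. -/
theorem qpr_direct_summand_regular (J : H →L[ℂ] H) (hJ : IsFundSym J)
    (S R : Submodule ℂ H) (hSqpr : IsQpr J S) (hRop : IsOpRange R)
    (hNneut : IsNeutral J (S ⊓ kOrth J S))
    (horth : AreKOrth J R (S ⊓ kOrth J S))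
    (hdir : R ⊓ (S ⊓ kOrth J S) = ⊥)
    (hsum : S = R ⊔ (S ⊓ kOrth J S)) :
    IsClosed (R : Set H) ∧ IsRegular J R := by
  classical
  obtain ⟨hJsa, hJ2⟩ := hJ
  have hJs : ∀ x y : H, (inner ℂ (J x) y : ℂ) = inner ℂ x (J y) := by
    intro x y
    have hadj : ContinuousLinearMap.adjoint J = J := by
      rw [← ContinuousLinearMap.star_eq_adjoint]; exact hJsa
    conv_lhs => rw [← hadj]
    exact ContinuousLinearMap.adjoint_inner_left J y x
  have hJJ : ∀ x : H, J (J x) = x := by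
    intro x
    calc J (J x) = (J ∘L J) x := rfl
    _ = x := by rw [hJ2]; rfl
  obtain ⟨hSop, R', N', hR'reg, hN'neut, hRN', hSdec⟩ := hSqpr
  obtain ⟨T, hT⟩ := hRop
  set N : Submodule ℂ H := S ⊓ kOrth J S with hNdef
  set M : Submodule ℂ H := kOrth J R' with hMdef
  have hR'closed : IsClosed (R' : Set H) := hR'reg.1
  have hMclosed : IsClosed (M : Set H) := kOrth_isClosed J R'
  have hR'S : R' ≤ S := hSdec ▸ le_sup_left
  have hN'S : N' ≤ S := hSdec ▸ le_sup_right
  have hRS : R ≤ S := hsum ▸ le_sup_left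
  have hN'M : N' ≤ M := fun b hb a ha => hRN' a ha b hb
  have hN'kS : N' ≤ kOrth J S := by
    intro n hn x hx
    rw [hSdec] at hx
    obtain ⟨a, ha, b, hb, rfl⟩ := Submodule.mem_sup.mp hx
    rw [map_add, inner_add_left, hRN' a ha n hn, neutral_pair hN'neut hb hn, add_zero]
  have hSM : ∀ s ∈ S, s ∈ M → s ∈ N := by
    intro s hs hsM
    rw [hSdec] at hs
    obtain ⟨a, ha, b, hb, rfl⟩ := Submodule.mem_sup.mp hs
    have haM : a ∈ M := by
      have he : a = (a + b) - b := by abel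
      rw [he]
      exact M.sub_mem hsM (hN'M hb)
    have h0 : a ∈ R' ⊓ M := ⟨ha, haM⟩
    rw [hR'reg.2.1, Submodule.mem_bot] at h0
    rw [h0, zero_add]
    exact ⟨hN'S hb, hN'kS hb⟩
  have hRM_bot : R ⊓ M = ⊥ := by
    rw [eq_bot_iff]
    rintro x ⟨hxR, hxM⟩
    have hxN : x ∈ N := hSM x (hRS hxR) hxM
    have h0 : x ∈ R ⊓ N := ⟨hxR, hxN⟩
    rw [hdir] at h0
    exact h0
  have hNM : N ≤ M := fun x hx => kOrth_antitone J hR'S hx.2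
  have hRM_top : R ⊔ M = ⊤ := by
    rw [eq_top_iff]
    intro x _
    have hx : x ∈ R' ⊔ M := by rw [hR'reg.2.2]; trivial
    have hR'RM : R' ≤ R ⊔ M := by
      refine le_trans hR'S ?_
      rw [hsum]
      exact sup_le le_sup_left (le_trans hNM le_sup_right)
    exact (sup_le hR'RM le_sup_right) hx
  have hcompl : IsCompl R M := ⟨disjoint_iff.mpr hRM_bot, codisjoint_iff.mpr hRM_top⟩
  -- R is closed
  haveI : CompleteSpace (LinearMap.ker (T : H →ₗ[ℂ] H)) :=
    (ContinuousLinearMap.isClosed_ker T).completeSpace_coe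
  set K : Submodule ℂ H := (LinearMap.ker (T : H →ₗ[ℂ] H))ᗮ with hKdef
  haveI : CompleteSpace K := (Submodule.isClosed_orthogonal _).completeSpace_coe
  set f : K →L[ℂ] H := T.comp K.subtypeL with hfdef
  have hfrange : LinearMap.range (f : K →ₗ[ℂ] H) = R := by
    apply le_antisymm
    · rintro _ ⟨y, rfl⟩
      rw [← hT]
      exact ⟨(y : H), rfl⟩
    · rintro x hx
      rw [← hT] at hx
      obtain ⟨v, rfl⟩ := hx
      obtain ⟨a, ha, b, hb, hab⟩ := (LinearMap.ker (T : H →ₗ[ℂ] H)).exists_add_mem_mem_orthogonal v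
      refine ⟨⟨b, hb⟩, ?_⟩
      have hTv : T v = T b := by
        rw [hab, map_add, (by simpa using LinearMap.mem_ker.mp ha : T a = 0), zero_add]
      simp only [hfdef, ContinuousLinearMap.comp_apply, Submodule.subtypeL_apply]
      exact hTv.symm
  have hfker : LinearMap.ker (f : K →ₗ[ℂ] H) = ⊥ := by
    rw [eq_bot_iff]
    rintro x hx
    have hxker : (x : H) ∈ LinearMap.ker (T : H →ₗ[ℂ] H) := by
      simpa [hfdef] using hx
    have h0 : (x : H) = 0 :=
      (Submodule.disjoint_def.mp (Submodule.orthogonal_disjoint (LinearMap.ker (T : H →ₗ[ℂ] H))))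
        _ hxker x.2
    exact (Submodule.mem_bot _).mpr (Subtype.ext h0)
  have hRclosed : IsClosed (R : Set H) := by
    have hcl := ContinuousLinearMap.closed_complemented_range_of_isCompl_of_ker_eq_bot f M
      (by rw [hfrange]; exact hcompl) hMclosed hfker
    rwa [hfrange] at hcl
  -- R ⊓ kOrth J R = ⊥
  have hRk_bot : R ⊓ kOrth J R = ⊥ := by
    rw [eq_bot_iff]
    rintro x ⟨hxR, hxk⟩
    have hxkS : x ∈ kOrth J S := by
      intro s hs
      rw [hsum] at hs
      obtain ⟨a, ha, b, hb, rfl⟩ := Submodule.mem_sup.mp hs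
      rw [map_add, inner_add_left, hxk a ha, zero_add, inner_J_swap hJs,
        horth x hxR b hb, map_zero]
    have h0 : x ∈ R ⊓ N := ⟨hxR, hRS hxR, hxkS⟩
    rw [hdir] at h0
    exact h0
  -- the bounded projection onto R' along M
  have hcompl' : IsCompl R' M := ⟨disjoint_iff.mpr hR'reg.2.1, codisjoint_iff.mpr hR'reg.2.2⟩
  set P : H →L[ℂ] R' := R'.linearProjOfClosedCompl M hcompl' hR'closed hMclosed with hPdef
  have hPcoe : ∀ x : H, P x = R'.linearProjOfIsCompl M hcompl' x := by
    intro x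
    rw [hPdef, Submodule.coe_continuous_linearProjOfClosedCompl']
    rfl
  have hPleft : ∀ x : H, x ∈ R' → (P x : H) = x := by
    intro x hx
    rw [hPcoe]
    exact congrArg _ (Submodule.linearProjOfIsCompl_apply_left hcompl' ⟨x, hx⟩)
  have hPright : ∀ x ∈ M, P x = 0 := by
    intro x hx
    rw [hPcoe]
    exact Submodule.linearProjOfIsCompl_apply_right' hcompl' hx
  have hPsub : ∀ x : H, x - (P x : H) ∈ M := by
    intro x
    have hx : x ∈ R' ⊔ M := by rw [hcompl'.sup_eq_top]; trivial
    obtain ⟨a, ha, b, hb, rfl⟩ := Submodule.mem_sup.mp hx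
    have hPa : (P (a + b) : H) = a := by
      rw [map_add, hPright b hb, add_zero, hPleft a ha]
    rw [hPa]
    simpa using hb
  -- the key identity: on S the form factors through P
  have hsubN : ∀ s ∈ S, s - (P s : H) ∈ kOrth J S := by
    intro s hs
    exact (hSM _ (S.sub_mem hs (hR'S (P s).2)) (hPsub s)).2
  have hkey : ∀ a ∈ S, ∀ b ∈ S,
      (inner ℂ (J a) b : ℂ) = inner ℂ (J (P a : H)) (P b : H) := by
    intro a ha b hb
    have h1 : (inner ℂ (J a) (b - (P b : H)) : ℂ) = 0 := hsubN b hb a ha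
    have h2 : (inner ℂ (J (a - (P a : H))) (P b : H) : ℂ) = 0 := by
      rw [inner_J_swap hJs, hsubN a ha (P b : H) (hR'S (P b).2), map_zero]
    rw [inner_sub_right] at h1
    rw [map_sub, inner_sub_left] at h2
    have e1 : (inner ℂ (J a) b : ℂ) = inner ℂ (J a) (P b : H) := sub_eq_zero.mp h1
    have e2 : (inner ℂ (J a) (P b : H) : ℂ) = inner ℂ (J (P a : H)) (P b : H) :=
      sub_eq_zero.mp h2
    rw [e1, e2]
  -- the restriction of P to R is a continuous bijection onto R'
  haveI : CompleteSpace R := hRclosed.completeSpace_coe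
  haveI : CompleteSpace R' := hR'closed.completeSpace_coe
  set g : R →L[ℂ] R' := P.comp R.subtypeL with hgdef
  have hgapp : ∀ x : R, g x = P (x : H) := fun x => rfl
  have hgker : LinearMap.ker (g : R →ₗ[ℂ] R') = ⊥ := by
    rw [eq_bot_iff]
    rintro x hx
    have hx0 : P (x : H) = 0 := hx
    have hxM : (x : H) ∈ M := by
      have := hPsub (x : H)
      rwa [hx0, Submodule.coe_zero, sub_zero] at this
    have h0 : (x : H) ∈ R ⊓ M := ⟨x.2, hxM⟩
    rw [hRM_bot, Submodule.mem_bot] at h0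
    exact (Submodule.mem_bot _).mpr (Subtype.ext h0)
  have hgrange : LinearMap.range (g : R →ₗ[ℂ] R') = ⊤ := by
    rw [eq_top_iff]
    rintro x' _
    have hx'S : (x' : H) ∈ S := hR'S x'.2
    rw [hsum] at hx'S
    obtain ⟨r, hr, n, hn, hrn⟩ := Submodule.mem_sup.mp hx'S
    refine ⟨⟨r, hr⟩, ?_⟩
    have hPn : P n = 0 := hPright n (hNM hn)
    have hPx' : P (x' : H) = x' := Subtype.ext (hPleft (x' : H) x'.2)
    have : P r = x' := by
      have hr' : r = (x' : H) - n := by rw [← hrn]; abel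
      rw [hr', map_sub, hPn, sub_zero, hPx']
    simpa [hgapp] using this
  set Fe : R ≃L[ℂ] R' := ContinuousLinearEquiv.ofBijective g hgker hgrange with hFedef
  have hFeapp : ∀ x : R, Fe x = g x := fun x => rfl
  -- R ⊔ kOrth J R = ⊤
  have hRk_top : R ⊔ kOrth J R = ⊤ := by
    rw [eq_top_iff]
    intro h0 _
    set ψ : R' →L[ℂ] ℂ :=
      ((innerSL ℂ ((P h0 : H))).comp (J.comp R'.subtypeL)) +
        ((innerSL ℂ h0).comp (J.comp
          ((R.subtypeL.comp (Fe.symm : R' →L[ℂ] R)) - R'.subtypeL))) with hψdef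
    have hψapp : ∀ x' : R', ψ x' =
        inner ℂ (P h0 : H) (J (x' : H)) + inner ℂ h0 (J (((Fe.symm x' : R) : H) - (x' : H))) := by
      intro x'
      simp [hψdef, ContinuousLinearMap.add_apply, ContinuousLinearMap.comp_apply,
        ContinuousLinearMap.sub_apply, Submodule.subtypeL_apply, innerSL_apply_apply, map_sub,
        inner_sub_right]
    obtain ⟨u, hu⟩ := (InnerProductSpace.toDual ℂ R').surjective ψ
    set w : H := J (u : H) with hwdef
    set r : H := ((Fe.symm (P w) : R) : H) with hrdef
    have hrR : r ∈ R := (Fe.symm (P w)).2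
    have hψval : ∀ x' : R', ψ x' = inner ℂ ((u : H)) ((x' : H)) := by
      intro x'
      rw [← hu, InnerProductSpace.toDual_apply_apply, Submodule.coe_inner]
    have hd : ∀ x ∈ R, (inner ℂ (J x) (h0 - r) : ℂ) = 0 := by
      intro x hx
      have hPxmem : (P x : H) ∈ R' := (P x).2
      have hFs : Fe.symm (P x) = ⟨x, hx⟩ := by
        have : P x = Fe ⟨x, hx⟩ := rfl
        rw [this, ContinuousLinearEquiv.symm_apply_apply]
      -- value of ψ at P x
      have hψPx : ψ (P x) =
          inner ℂ (P h0 : H) (J (P x : H)) + inner ℂ h0 (J (x - (P x : H))) := by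
        rw [hψapp (P x), hFs]
      -- A : ⟪J x, h0⟫ = conj (ψ (P x))
      have hA : (inner ℂ (J x) h0 : ℂ) = starRingEnd ℂ (ψ (P x)) := by
        rw [hψPx, map_add, inner_conj_symm, inner_conj_symm]
        have t1 : (inner ℂ (J (P x : H)) (h0 - (P h0 : H)) : ℂ) = 0 :=
          (hPsub h0) (P x : H) hPxmem
        rw [inner_sub_right] at t1
        rw [map_sub, inner_sub_left]
        linear_combination t1
      -- B : ⟪J x, r⟫ = conj (ψ (P x))
      have hB : (inner ℂ (J x) r : ℂ) = starRingEnd ℂ (ψ (P x)) := by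
        have hk := hkey x (hRS hx) r (hRS hrR)
        have hPr : (P r : H) = (P w : H) := by
          have : g (Fe.symm (P w)) = P w := by
            rw [← hFeapp, ContinuousLinearEquiv.apply_symm_apply]
          exact congrArg Subtype.val this
        have t2 : (inner ℂ (J (P x : H)) (w - (P w : H)) : ℂ) = 0 :=
          (hPsub w) (P x : H) hPxmem
        rw [inner_sub_right] at t2
        have hJw : J w = (u : H) := by rw [hwdef, hJJ]
        have t3 : (inner ℂ (J (P x : H)) w : ℂ) = inner ℂ ((P x : H)) ((u : H)) := by
          rw [hJs, hJw]
        have t4 : starRingEnd ℂ (ψ (P x)) = inner ℂ ((P x : H)) ((u : H)) := by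
          rw [hψval (P x), inner_conj_symm]
        rw [hk, hPr, t4]
        linear_combination t3 - t2
      rw [inner_sub_right, hA, hB, sub_self]
    have hsplit : h0 = r + (h0 - r) := by abel
    rw [hsplit]
    exact Submodule.add_mem_sup hrR (fun x hx => hd x hx)
  exact ⟨hRclosed, hRclosed, hRk_bot, hRk_top⟩

end KreinPaper
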